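/- Consider the recurrence u^{k}_n = R·u^{k}_{n-1} + S·u^{k-1}_{n-1} for complex numbers R, S, with initial conditions u^{0}_n = R^n·u_0 for all n ≥ 0 and u^{k}_0 = u_0 for all k ≥ 0. Then for all k and all n ≥ k, u^{k}_n = (∑_{i=0}^{k} C(n,i) · S^i · R^{n-i}) · u_0, where C(n,i) is the binomial coefficient. -/
import Mathlib


open Finset

lemma parareal_term_step (R S : ℂ) (n j : ℕ) :
    ((n+1).choose (j+1) : ℂ) * S ^ (j+1) * R ^ (n + 1 - (j+1))
    = R * ((n.choose (j+1) : ℂ) * S ^ (j+1) * R ^ (n - (j+1)))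
      + S * ((n.choose j : ℂ) * S ^ j * R ^ (n - j)) := by
  rw [Nat.choose_succ_succ, Nat.succ_sub_succ]
  push_cast
  rcases le_or_gt (j+1) n with h | h
  · have h1 : n - j = (n - (j+1)) + 1 := by omega
    rw [h1]
    ring
  · have h1 : n.choose (j+1) = 0 := Nat.choose_eq_zero_of_lt h
    rw [h1]
    push_cast
    ring

lemma parareal_sum_step (R S : ℂ) (k n : ℕ) :
    (∑ i ∈ Finset.range (k + 2), ((n+1).choose i : ℂ) * S ^ i * R ^ (n + 1 - i))
    = R * (∑ i ∈ Finset.range (k + 2), (n.choose i : ℂ) * S ^ i * R ^ (n - i))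
      + S * (∑ i ∈ Finset.range (k + 1), (n.choose i : ℂ) * S ^ i * R ^ (n - i)) := by
  rw [Finset.sum_range_succ' (fun i => ((n+1).choose i : ℂ) * S ^ i * R ^ (n + 1 - i)) (k+1),
      Finset.mul_sum, Finset.mul_sum,
      Finset.sum_range_succ' (fun i => R * ((n.choose i : ℂ) * S ^ i * R ^ (n - i))) (k+1)]
  have : ∀ j ∈ Finset.range (k+1),
      ((n+1).choose (j+1) : ℂ) * S ^ (j+1) * R ^ (n + 1 - (j+1))
      = R * ((n.choose (j+1) : ℂ) * S ^ (j+1) * R ^ (n - (j+1)))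
        + S * ((n.choose j : ℂ) * S ^ j * R ^ (n - j)) := fun j _ => parareal_term_step R S n j
  rw [Finset.sum_congr rfl this, Finset.sum_add_distrib]
  simp
  ring

theorem parareal_closed_form (R S u0 : ℂ) (u : ℕ → ℕ → ℂ)
    (h0 : ∀ n : ℕ, u 0 n = R ^ n * u0)
    (hbase : ∀ k : ℕ, u k 0 = u0)
    (hrec : ∀ k n : ℕ, u (k + 1) (n + 1) = R * u (k + 1) n + S * u k n) :
    ∀ k n : ℕ, k ≤ n →
      u k n = (∑ i ∈ Finset.range (k + 1),
        (n.choose i : ℂ) * S ^ i * R ^ (n - i)) * u0 := by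
  have key : ∀ k n : ℕ, u k n = (∑ i ∈ Finset.range (k + 1),
      (n.choose i : ℂ) * S ^ i * R ^ (n - i)) * u0 := by
    intro k
    induction k with
    | zero => intro n; simpa using h0 n
    | succ k ih =>
      intro n
      induction n with
      | zero =>
        rw [hbase, Finset.sum_eq_single 0]
        · simp
        · intro b _ hb0
          cases b with
          | zero => exact absurd rfl hb0
          | succ b => simp
        · simp
      | succ n ihn =>
        rw [hrec, ihn, ih n, show k + 1 + 1 = k + 2 from rfl, parareal_sum_step]
        ring
  exact fun k n _ => key k n
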